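/- Let Y ∈ {0,1}^{c×n} have rank c with SVD Y = U_Y Σ_Y V_Yᵀ, where V_Y ∈ St_c(ℝⁿ) has rows v₁ᵀ, …, v_nᵀ. Let I ⊆ [n] be a maximal index set such that for distinct i, j ∈ I, the columns y_i ≠ y_j. If rank Y = |I|, then: (1) for all i, j ∈ [n], y_i = y_j if and only if v_i = v_j; and (2) the vectors {√|J_i| · v_i}_{i∈I}, where J_i = {j ∈ [n] : y_j = y_i}, form an orthonormal basis for ℝ^c; in particular {v_i}_{i∈I} is an orthogonal basis of ℝ^c. -/

import Mathlib

open Matrix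
open scoped Classical

/-- Minterm orthogonality. Let `Y ∈ {0,1}^{c×n}` have rank `c`
with SVD `Y = U_Y Σ_Y V_Yᵀ`, `V_Y ∈ St_c(ℝⁿ)` with rows `v₁ᵀ, …, v_nᵀ`. Let
`I ⊆ [n]` be a maximal index set of pairwise distinct columns. If `rank Y = |I|`
then (1) `y_i = y_j ↔ v_i = v_j`, and (2) the vectors `√|J_i| · v_i` for `i ∈ I`
(`J_i = {j : y_j = y_i}`) form an orthonormal basis of `ℝ^c`; in particular
`{v_i}_{i∈I}` is an orthogonal basis of `ℝ^c`. -/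
theorem minterm_orthogonality
    {c n : ℕ} (Y : Matrix (Fin c) (Fin n) ℝ)
    (hbin : ∀ i j, Y i j = 0 ∨ Y i j = 1)
    (UY : Matrix (Fin c) (Fin c) ℝ) (μ : Fin c → ℝ) (VY : Matrix (Fin n) (Fin c) ℝ)
    (hUY : UYᵀ * UY = 1) (hVY : VYᵀ * VY = 1) (hμpos : ∀ i, 0 < μ i)
    (hSVD : Y = UY * Matrix.diagonal μ * VYᵀ)
    (hrank : Y.rank = c)
    (I : Finset (Fin n))
    (hdistinct : ∀ i ∈ I, ∀ j ∈ I, i ≠ j → (fun a => Y a i) ≠ (fun a => Y a j))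
    (hmaximal : ∀ j : Fin n, ∃ i ∈ I, (fun a => Y a j) = (fun a => Y a i))
    (hcard : Y.rank = I.card) :
    (∀ i j : Fin n,
        (fun a => Y a i) = (fun a => Y a j) ↔
          (fun a => VY i a) = (fun a => VY j a)) ∧
      (∀ i ∈ I, ∀ j ∈ I,
        (Real.sqrt (Finset.univ.filter fun l => (fun a => Y a l) = fun a => Y a i).card
            • fun a => VY i a) ⬝ᵥ
          (Real.sqrt (Finset.univ.filter fun l => (fun a => Y a l) = fun a => Y a j).card
            • fun a => VY j a) = if i = j then 1 else 0) ∧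
      Submodule.span ℝ {w : Fin c → ℝ | ∃ i ∈ I, w = fun a => VY i a} = ⊤ := by
  -- A = UY * diagonal μ is invertible
  set A : Matrix (Fin c) (Fin c) ℝ := UY * Matrix.diagonal μ with hA
  have hdetU : UY.det * UY.det = 1 := by
    have := congrArg Matrix.det hUY
    rwa [Matrix.det_mul, Matrix.det_transpose, Matrix.det_one] at this
  have hdetA : A.det ≠ 0 := by
    rw [hA, Matrix.det_mul, Matrix.det_diagonal]
    refine mul_ne_zero (fun h => by simp [h] at hdetU) ?_
    exact Finset.prod_ne_zero_iff.mpr fun i _ => (hμpos i).ne'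
  have hAunit : IsUnit A := (Matrix.isUnit_iff_isUnit_det A).mpr (isUnit_iff_ne_zero.mpr hdetA)
  have hAinj : Function.Injective (A.mulVec) := Matrix.mulVec_injective_iff_isUnit.mpr hAunit
  -- columns of Y
  have hcol : ∀ i : Fin n, (fun a => Y a i) = A.mulVec (fun k => VY i k) := by
    intro i
    funext a
    rw [hSVD]
    simp [Matrix.mul_apply, Matrix.mulVec, dotProduct]
  -- part 1
  have part1 : ∀ i j : Fin n,
      (fun a => Y a i) = (fun a => Y a j) ↔ (fun a => VY i a) = (fun a => VY j a) := by
    intro i j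
    constructor
    · intro h
      rw [hcol i, hcol j] at h
      exact hAinj h
    · intro h
      rw [hcol i, hcol j, h]
  -- classes
  set J : Fin n → Finset (Fin n) :=
    fun i => Finset.univ.filter fun l => (fun a => Y a l) = fun a => Y a i with hJ
  have hrows : ∀ i : Fin n, ∀ l ∈ J i, (fun a => VY l a) = fun a => VY i a := by
    intro i l hl
    rw [hJ] at hl
    simp only [Finset.mem_filter] at hl
    exact (part1 l i).mp hl.2
  have hIC : I.card = c := by rw [← hcard, hrank]
  -- partition of univ
  have hpart : (Finset.univ : Finset (Fin n)) = I.biUnion J := by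
    refine Finset.ext fun l => ?_
    simp only [Finset.mem_univ, true_iff, Finset.mem_biUnion]
    obtain ⟨i, hi, h⟩ := hmaximal l
    exact ⟨i, hi, by simp [hJ, h]⟩
  have hdisj : ∀ i ∈ I, ∀ j ∈ I, i ≠ j → Disjoint (J i) (J j) := by
    intro i hi j hj hij
    refine Finset.disjoint_left.mpr fun l hli hlj => ?_
    simp only [hJ, Finset.mem_filter] at hli hlj
    exact hdistinct i hi j hj hij (hli.2.symm.trans hlj.2)
  -- the key sum identity
  have hsum : ∀ a b : Fin c,
      (∑ i ∈ I, ((J i).card : ℝ) * (VY i a * VY i b)) = if a = b then 1 else 0 := by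
    intro a b
    have h1 : (VYᵀ * VY) a b = if a = b then 1 else 0 := by rw [hVY, Matrix.one_apply]
    rw [Matrix.mul_apply] at h1
    simp only [Matrix.transpose_apply] at h1
    rw [← h1]
    rw [show (∑ l : Fin n, VY l a * VY l b) = ∑ l ∈ I.biUnion J, VY l a * VY l b from by
      rw [← hpart]]
    rw [Finset.sum_biUnion hdisj]
    refine Finset.sum_congr rfl fun i hi => ?_
    rw [Finset.sum_congr rfl fun l hl => by
      have := hrows i l hl
      have ha : VY l a = VY i a := congrFun this a
      have hb : VY l b = VY i b := congrFun this b
      rw [ha, hb]]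
    rw [Finset.sum_const, nsmul_eq_mul]
  -- equiv Fin c ≃ I
  have e : Fin c ≃ {x // x ∈ I} := (Fintype.equivFinOfCardEq (by simp [hIC])).symm
  set W : Matrix (Fin c) (Fin c) ℝ :=
    fun a k => Real.sqrt ((J (e k)).card) * VY (e k) a with hW
  have hWWt : W * Wᵀ = 1 := by
    refine Matrix.ext fun a b => ?_
    rw [Matrix.mul_apply]
    simp only [Matrix.transpose_apply]
    simp only [hW]
    have : ∀ k : Fin c,
        Real.sqrt ((J (e k)).card) * VY (e k) a * (Real.sqrt ((J (e k)).card) * VY (e k) b)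
          = ((J (e k)).card : ℝ) * (VY (e k) a * VY (e k) b) := by
      intro k
      have : Real.sqrt ((J (e k)).card) * Real.sqrt ((J (e k)).card) = ((J (e k)).card : ℝ) :=
        Real.mul_self_sqrt (Nat.cast_nonneg _)
      ring_nf
      rw [Real.sq_sqrt (Nat.cast_nonneg _)]
      ring
    rw [Finset.sum_congr rfl fun k _ => this k]
    rw [e.sum_comp (fun x : {x // x ∈ I} => ((J x).card : ℝ) * (VY x a * VY x b))]
    rw [Finset.sum_coe_sort I (fun i => ((J i).card : ℝ) * (VY i a * VY i b))]
    rw [hsum a b, Matrix.one_apply]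
  have hWtW : Wᵀ * W = 1 := mul_eq_one_comm.mp hWWt
  refine ⟨part1, ?_, ?_⟩
  · intro i hi j hj
    have hk : ∀ a, (Real.sqrt ((J i).card) • fun a => VY i a) a = W a (e.symm ⟨i, hi⟩) := by
      intro a
      simp [hW, e.apply_symm_apply]
    have hk' : ∀ a, (Real.sqrt ((J j).card) • fun a => VY j a) a = W a (e.symm ⟨j, hj⟩) := by
      intro a
      simp [hW, e.apply_symm_apply]
    have : (Wᵀ * W) (e.symm ⟨i, hi⟩) (e.symm ⟨j, hj⟩) = if i = j then 1 else 0 := by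
      rw [hWtW, Matrix.one_apply]
      congr 1
      simp only [eq_iff_iff]
      rw [Equiv.apply_eq_iff_eq e.symm]
      simp [Subtype.ext_iff]
    rw [← this, Matrix.mul_apply]
    simp only [Matrix.transpose_apply, dotProduct]
    exact Finset.sum_congr rfl fun a _ => by rw [hk a, hk' a]
  · rw [eq_top_iff]
    intro x _
    have hx : x = W.mulVec (Wᵀ.mulVec x) := by
      rw [Matrix.mulVec_mulVec, hWWt, Matrix.one_mulVec]
    have key : ∀ z : Fin c → ℝ, W.mulVec z = ∑ k : Fin c, z k • (fun a => W a k) := by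
      intro z
      funext a
      rw [Finset.sum_apply]
      simp [Matrix.mulVec, dotProduct, mul_comm]
    rw [hx, key]
    refine Submodule.sum_mem _ fun k _ => ?_
    refine Submodule.smul_mem _ _ ?_
    have hv : (fun a => VY (e k) a) ∈
        Submodule.span ℝ {w : Fin c → ℝ | ∃ i ∈ I, w = fun a => VY i a} :=
      Submodule.subset_span ⟨e k, (e k).2, rfl⟩
    have : (fun a => W a k) = Real.sqrt ((J (e k)).card) • (fun a => VY (e k) a) := by
      funext a; simp [hW]
    rw [this]
    exact Submodule.smul_mem _ _ hv
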